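/- On a fully homogeneous star platform (c_i = c and w_i = w for all workers), in every iteration i the Best-Balance Algorithm chooses as receiver of the i-th redistributed task a worker that, among all workers, finishes processing first the load it holds after iteration i−1. -/
import Mathlib

/-- **In each iteration, the Best-Balance Algorithm chooses as receiver a worker
that finishes processing first.**  On a fully homogeneous star platform (all
links have per-task communication time `c`, all workers per-task computation time
`w`), consider an iteration of BBA: `endt k` is the finish time of worker `k`
after the previous iteration, and the task to be redistributed arrives at a
worker at time `A = max (masterIn + c) masterOut + c`, so that worker `k` would
finish it at the temporary finish time `max (endt k) A + w`.  If `r` is the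
worker chosen by BBA — a worker with minimal temporary finish time, ties broken
by minimal `endt` — then `r` finishes processing first among all workers:
`endt r ≤ endt k` for every `k`. -/
theorem bba_receiver_finishes_first
    (m : ℕ) (c w : ℝ) (hc : 0 < c) (hw : 0 < w)
    (endt : Fin m → ℝ) (masterIn masterOut : ℝ) (r : Fin m)
    (hmin : ∀ k : Fin m,
      max (endt r) (max (masterIn + c) masterOut + c) + w ≤
        max (endt k) (max (masterIn + c) masterOut + c) + w)
    (htie : ∀ k : Fin m,
      max (endt k) (max (masterIn + c) masterOut + c) + w =
        max (endt r) (max (masterIn + c) masterOut + c) + w →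
      endt r ≤ endt k) :
    ∀ k : Fin m, endt r ≤ endt k := by
  intro k
  set A := max (masterIn + c) masterOut + c with hA
  rcases lt_or_eq_of_le (hmin k) with hlt | heq
  · -- strict: max (endt r) A < max (endt k) A, so endt k > A and endt r < endt k
    have h : max (endt r) A < max (endt k) A := by linarith
    have h2 : A ≤ max (endt r) A := le_max_right _ _
    have h3 : max (endt k) A = endt k := by
      rcases max_cases (endt k) A with ⟨h4, _⟩ | ⟨h4, _⟩
      · exact h4
      · linarith
    have : endt r < endt k := calc endt r ≤ max (endt r) A := le_max_left _ _
      _ < endt k := h3 ▸ h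
    linarith
  · exact htie k heq.symm
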